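/- Every G-invariant element of R′ lies in the K-subalgebra of R′ generated by the images of the orbit polynomials \overline{x_a}, where a ranges over the atoms; that is, every element of R′ fixed by G is a K-coefficient polynomial in the orbit polynomials of monomials that begin with x_1 and have all their indeterminates to the first power. -/

import Mathlib

open Finset

/-- The `k`-th elementary polynomial `σ_k` in the noncommuting variables
`x_1, …, x_n` of the free algebra `K⟨x_1,…,x_n⟩`. -/
noncomputable def elemPoly (K : Type*) [Field K] (n k : ℕ) : FreeAlgebra K (Fin n) :=
  ∑ s ∈ Finset.univ.powersetCard k, ((s.sort (· ≤ ·)).map (FreeAlgebra.ι K)).prod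

/-- The relation on the free algebra identifying `x_i * σ_k` with `σ_k * x_i`
for `1 ≤ i, k ≤ n`; the quotient `R′ = P/I` by the two-sided ideal `I` generated
by the commutators `[x_i, σ_k]` is `RingQuot` of this relation. -/
noncomputable def commRel (K : Type*) [Field K] (n : ℕ) :
    FreeAlgebra K (Fin n) → FreeAlgebra K (Fin n) → Prop :=
  fun a b => ∃ (i : Fin n) (k : ℕ), 1 ≤ k ∧ k ≤ n ∧
    a = FreeAlgebra.ι K i * elemPoly K n k ∧ b = elemPoly K n k * FreeAlgebra.ι K i

/-- The quotient ring `R′ = P/I`. -/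
noncomputable abbrev Rquot (K : Type*) [Field K] (n : ℕ) := RingQuot (commRel K n)

/-- The quotient map `P → R′`. -/
noncomputable def mkR (K : Type*) [Field K] (n : ℕ) :
    FreeAlgebra K (Fin n) →ₐ[K] Rquot K n :=
  RingQuot.mkAlgHom K (commRel K n)

/-- The image in `R′` of the generator `x_i`. -/
noncomputable def XR (K : Type*) [Field K] (n : ℕ) (i : Fin n) : Rquot K n :=
  mkR K n (FreeAlgebra.ι K i)

/-- The generator of the group `G` of circular permutations, acting as the
`K`-algebra automorphism of the free algebra sending `x_i` to `x_{i+1}` (mod `n`). -/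
noncomputable def rotHom (K : Type*) [Field K] (n : ℕ) :
    FreeAlgebra K (Fin n) →ₐ[K] FreeAlgebra K (Fin n) :=
  FreeAlgebra.lift K fun i => FreeAlgebra.ι K (finRotate n i)

/-- The monomial `x_w = x_{i(1)} ⋯ x_{i(d)}` of a word `w`. -/
noncomputable def wordMonomial (K : Type*) [Field K] (n : ℕ) (w : List (Fin n)) :
    FreeAlgebra K (Fin n) :=
  (w.map (FreeAlgebra.ι K)).prod

/-- The orbit polynomial `\overline{x_w} = ∑_{g ∈ G} (x_w)^g` of a word `w`
(the group `G` of circular permutations has order `n`). -/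
noncomputable def orbitPoly (K : Type*) [Field K] (n : ℕ) (w : List (Fin n)) :
    FreeAlgebra K (Fin n) :=
  ∑ m ∈ Finset.range n, (⇑(rotHom K n))^[m] (wordMonomial K n w)

section Aux
variable (K : Type*) [Field K] (n : ℕ)

lemma wm_nil : wordMonomial K n [] = 1 := rfl

lemma wm_cons (a : Fin n) (w : List (Fin n)) :
    wordMonomial K n (a :: w) = FreeAlgebra.ι K a * wordMonomial K n w := by
  simp [wordMonomial]

lemma wm_append (u v : List (Fin n)) :
    wordMonomial K n (u ++ v) = wordMonomial K n u * wordMonomial K n v := by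
  simp [wordMonomial]

lemma rot_ι (i : Fin n) : rotHom K n (FreeAlgebra.ι K i) = FreeAlgebra.ι K (finRotate n i) :=
  FreeAlgebra.lift_ι_apply _ _

lemma rot_wm (w : List (Fin n)) :
    rotHom K n (wordMonomial K n w) = wordMonomial K n (w.map (finRotate n)) := by
  induction w with
  | nil => simp [wm_nil]
  | cons a t ih => simp [wm_cons, map_mul, ih, rot_ι]

lemma iterate_rot_wm (m : ℕ) (w : List (Fin n)) :
    (⇑(rotHom K n))^[m] (wordMonomial K n w) =
      wordMonomial K n (w.map ((⇑(finRotate n))^[m])) := by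
  induction m with
  | zero => simp
  | succ m ih =>
      rw [Function.iterate_succ_apply', ih, rot_wm, List.map_map, ← Function.iterate_succ']

lemma sigma1_eq : elemPoly K n 1 = ∑ i : Fin n, FreeAlgebra.ι K i := by
  rw [elemPoly, Finset.powersetCard_one, Finset.sum_map]
  congr 1
  ext i
  simp [Finset.sort_singleton]

open Fin.NatCast in
lemma finRotate_iterate {n : ℕ} (m : ℕ) (i : Fin (n + 1)) :
    (⇑(finRotate (n + 1)))^[m] i = i + (m : Fin (n + 1)) := by
  induction m with
  | zero => simp
  | succ m ih =>
      rw [Function.iterate_succ_apply', ih, finRotate_succ_apply]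
      push_cast
      rw [add_assoc]

lemma finRotate_iterate_n {n : ℕ} (hn : n ≠ 0) (i : Fin n) :
    (⇑(finRotate n))^[n] i = i := by
  obtain ⟨n', rfl⟩ := Nat.exists_eq_succ_of_ne_zero hn
  rw [finRotate_iterate]
  simp

lemma orbitPoly_eq (w : List (Fin n)) :
    orbitPoly K n w = ∑ m ∈ Finset.range n, wordMonomial K n (w.map ((⇑(finRotate n))^[m])) := by
  simp [orbitPoly, iterate_rot_wm]

lemma orbitPoly_map (hn : n ≠ 0) (w : List (Fin n)) :
    orbitPoly K n (w.map (finRotate n)) = orbitPoly K n w := by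
  rw [orbitPoly_eq, orbitPoly_eq]
  have key : ∀ m : ℕ, (w.map (finRotate n)).map ((⇑(finRotate n))^[m])
      = w.map ((⇑(finRotate n))^[m + 1]) := by
    intro m
    rw [List.map_map, ← Function.iterate_succ]
  simp only [key]
  have h0 : w.map ((⇑(finRotate n))^[n]) = w.map ((⇑(finRotate n))^[0]) := by
    apply List.map_congr_left
    intro a _
    simp [finRotate_iterate_n hn]
  calc ∑ m ∈ Finset.range n, wordMonomial K n (w.map ((⇑(finRotate n))^[m + 1]))
      = ∑ m ∈ Finset.range (n + 1), wordMonomial K n (w.map ((⇑(finRotate n))^[m]))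
        - wordMonomial K n (w.map ((⇑(finRotate n))^[0])) := by
        rw [Finset.sum_range_succ' (fun m => wordMonomial K n (w.map ((⇑(finRotate n))^[m])))]
        abel
    _ = _ := by
        rw [Finset.sum_range_succ, h0]
        abel

lemma orbitPoly_map_iterate (hn : n ≠ 0) (m : ℕ) (w : List (Fin n)) :
    orbitPoly K n (w.map ((⇑(finRotate n))^[m])) = orbitPoly K n w := by
  induction m generalizing w with
  | zero => simp
  | succ m ih =>
      rw [Function.iterate_succ, ← List.map_map, ih, orbitPoly_map K n hn]

end Aux

lemma ring_helper {R : Type*} [Ring R] {ι : Type*} (s : Finset ι) (U X S V : R) (Y : ι → R)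
    (hXX : X * X = X * S - ∑ j ∈ s, X * Y j) (hc : U * (X * S) = S * (U * X)) :
    U * (X * (X * V)) = S * (U * (X * V)) - ∑ j ∈ s, U * (X * (Y j * V)) := by
  have h2 := congrArg (fun z => U * (z * V)) hXX
  have h3 := congrArg (fun z => z * V) hc
  simp only [sub_mul, Finset.sum_mul, mul_sub, Finset.mul_sum, mul_assoc] at h2 h3 ⊢
  rw [h2, h3]

section Alg2
variable (K : Type*) [Field K] (n : ℕ)

lemma central_ι (h1 : 1 ≤ n) (i : Fin n) :
    mkR K n (FreeAlgebra.ι K i) * mkR K n (elemPoly K n 1)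
      = mkR K n (elemPoly K n 1) * mkR K n (FreeAlgebra.ι K i) := by
  have h : commRel K n (FreeAlgebra.ι K i * elemPoly K n 1) (elemPoly K n 1 * FreeAlgebra.ι K i) :=
    ⟨i, 1, le_rfl, h1, rfl, rfl⟩
  have := RingQuot.mkAlgHom_rel K h
  rw [map_mul, map_mul] at this
  exact this

lemma central_wm (h1 : 1 ≤ n) (w : List (Fin n)) :
    mkR K n (wordMonomial K n w) * mkR K n (elemPoly K n 1)
      = mkR K n (elemPoly K n 1) * mkR K n (wordMonomial K n w) := by
  induction w with
  | nil => simp [wm_nil]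
  | cons a t ih =>
      rw [wm_cons, map_mul, mul_assoc, ih, ← mul_assoc, central_ι K n h1, mul_assoc]

lemma word_rewrite (h1 : 1 ≤ n) (u v : List (Fin n)) (a : Fin n) :
    mkR K n (wordMonomial K n (u ++ a :: a :: v)) =
      mkR K n (elemPoly K n 1) * mkR K n (wordMonomial K n (u ++ a :: v))
        - ∑ j ∈ Finset.univ.erase a, mkR K n (wordMonomial K n (u ++ a :: j :: v)) := by
  have key : FreeAlgebra.ι K a * FreeAlgebra.ι K a
      = FreeAlgebra.ι K a * elemPoly K n 1
        - ∑ j ∈ Finset.univ.erase a, FreeAlgebra.ι K a * FreeAlgebra.ι K (j : Fin n) := by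
    rw [sigma1_eq, Finset.mul_sum, ← Finset.add_sum_erase _ _ (Finset.mem_univ a)]
    abel
  have hXX := congrArg (mkR K n) key
  simp only [map_sub, map_mul, map_sum] at hXX
  have hc0 := central_wm K n h1 (u ++ [a])
  rw [wm_append, wm_cons, wm_nil, mul_one, map_mul] at hc0
  simp only [mul_assoc] at hc0
  simp only [wm_append, wm_cons, map_mul]
  exact ring_helper _ _ _ _ _ _ hXX hc0

end Alg2

section Alg3
variable (K : Type*) [Field K] (n : ℕ)

lemma erase_reindex {M : Type*} [AddCommMonoid M] (e : Equiv.Perm (Fin n)) (a : Fin n)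
    (F : Fin n → M) :
    ∑ j ∈ Finset.univ.erase (e a), F j = ∑ j ∈ Finset.univ.erase a, F (e j) := by
  conv_lhs => rw [show (e a) = e.toEmbedding a from rfl, ← Finset.map_univ_equiv e,
    ← Finset.map_erase, Finset.sum_map]
  rfl

lemma orbit_rewrite (h1 : 1 ≤ n) (u v : List (Fin n)) (a : Fin n) :
    mkR K n (orbitPoly K n (u ++ a :: a :: v)) =
      mkR K n (elemPoly K n 1) * mkR K n (orbitPoly K n (u ++ a :: v))
        - ∑ j ∈ Finset.univ.erase a, mkR K n (orbitPoly K n (u ++ a :: j :: v)) := by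
  simp only [orbitPoly_eq, map_sum]
  have step : ∀ m ∈ Finset.range n,
      mkR K n (wordMonomial K n ((u ++ a :: a :: v).map ((⇑(finRotate n))^[m])))
        = mkR K n (elemPoly K n 1)
            * mkR K n (wordMonomial K n ((u ++ a :: v).map ((⇑(finRotate n))^[m])))
          - ∑ j ∈ Finset.univ.erase a,
              mkR K n (wordMonomial K n ((u ++ a :: j :: v).map ((⇑(finRotate n))^[m]))) := by
    intro m _
    have e : Equiv.Perm (Fin n) := (finRotate n) ^ m
    have hco : (⇑(finRotate n))^[m] = ⇑((finRotate n) ^ m) := Equiv.Perm.iterate_eq_pow _ _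
    simp only [List.map_append, List.map_cons, hco]
    rw [word_rewrite K n h1]
    rw [erase_reindex n ((finRotate n) ^ m) a]
  rw [Finset.sum_congr rfl step, Finset.sum_sub_distrib, ← Finset.mul_sum, Finset.sum_comm]

end Alg3

section Mu
variable {α : Type*} [DecidableEq α]

def mu : List α → ℕ
  | [] => 0
  | [_] => 0
  | a :: b :: t => (if a = b then 2 ^ t.length else 0) + mu (b :: t)

lemma mu_cons_lt (x : α) (t : List α) : mu (x :: t) < 2 ^ t.length := by
  induction t generalizing x with
  | nil => simp [mu]
  | cons y s ih =>
      have h1 : mu (x :: y :: s) = (if x = y then 2 ^ s.length else 0) + mu (y :: s) := rfl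
      have h2 := ih y
      have h3 : (if x = y then 2 ^ s.length else 0) ≤ 2 ^ s.length := by split <;> omega
      have h4 : (2:ℕ) ^ (y :: s).length = 2 ^ s.length + 2 ^ s.length := by
        simp [List.length_cons, pow_succ]; ring
      omega

lemma mu_set_lt : ∀ (u : List α) (a j : α) (v : List α), j ≠ a →
    mu (u ++ a :: j :: v) < mu (u ++ a :: a :: v) := by
  intro u
  induction u with
  | nil =>
      intro a j v hj
      have h1 : mu ([] ++ a :: j :: v) = (if a = j then 2 ^ v.length else 0) + mu (j :: v) := rfl
      have h2 : mu ([] ++ a :: a :: v) = (if a = a then 2 ^ v.length else 0) + mu (a :: v) := rfl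
      rw [h1, h2, if_neg (fun h => hj h.symm), if_pos rfl]
      have := mu_cons_lt j v
      omega
  | cons x u' ih =>
      intro a j v hj
      cases u' with
      | nil =>
          have h1 : mu ((x :: []) ++ a :: j :: v)
              = (if x = a then 2 ^ (j :: v).length else 0) + mu (a :: j :: v) := rfl
          have h2 : mu ((x :: []) ++ a :: a :: v)
              = (if x = a then 2 ^ (a :: v).length else 0) + mu (a :: a :: v) := rfl
          have h3 := ih a j v hj
          simp only [List.nil_append] at h3
          simp only [h1, h2, List.length_cons]
          omega
      | cons y u'' =>
          have h1 : mu ((x :: y :: u'') ++ a :: j :: v)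
              = (if x = y then 2 ^ ((u'' ++ a :: j :: v).length) else 0)
                + mu (y :: (u'' ++ a :: j :: v)) := rfl
          have h2 : mu ((x :: y :: u'') ++ a :: a :: v)
              = (if x = y then 2 ^ ((u'' ++ a :: a :: v).length) else 0)
                + mu (y :: (u'' ++ a :: a :: v)) := rfl
          have h3 := ih a j v hj
          have h4 : (u'' ++ a :: j :: v).length = (u'' ++ a :: a :: v).length := by
            simp [List.length_append]
          simp only [List.cons_append] at h1 h2 h3 ⊢
          rw [h4] at h1
          rw [h1, h2]
          omega

lemma not_chain'_decomp : ∀ w : List α, ¬ w.Chain' (· ≠ ·) →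
    ∃ (u : List α) (a : α) (v : List α), w = u ++ a :: a :: v := by
  intro w
  induction w with
  | nil => intro h; exact absurd List.isChain_nil h
  | cons x t ih =>
      intro h
      cases t with
      | nil => exact absurd (List.isChain_singleton x) h
      | cons y s =>
          rw [List.Chain', List.isChain_cons_cons] at h
          push_neg at h
          by_cases hxy : x = y
          · subst hxy
            exact ⟨[], x, s, rfl⟩
          · obtain ⟨u, a, v, huav⟩ := ih (h hxy)
            exact ⟨x :: u, a, v, by rw [huav]; rfl⟩

end Mu

section Main
variable (K : Type*) [Field K] (n : ℕ)

def atomSet : Set (Rquot K n) :=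
  {y : Rquot K n | ∃ w : List (Fin n),
    (w.map Fin.val).head? = some 0 ∧ w.Chain' (· ≠ ·) ∧
    y = mkR K n (orbitPoly K n w)}

open Fin.NatCast in
lemma iterate_hit_zero (hn : 3 ≤ n) (b : Fin n) :
    (⇑(finRotate n))^[n - b.val] b = ⟨0, by omega⟩ := by
  haveI : NeZero n := ⟨by omega⟩
  have hz : (⟨0, by omega⟩ : Fin n) = (0 : Fin n) := rfl
  rw [hz]
  obtain ⟨n', rfl⟩ := Nat.exists_eq_succ_of_ne_zero (by omega : n ≠ 0)
  rw [finRotate_iterate]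
  apply Fin.ext
  have hb := b.isLt
  rw [Fin.add_def, Fin.val_natCast, Fin.val_zero]
  rcases Nat.eq_zero_or_pos b.val with h0 | hpos
  · simp [h0, Nat.mod_self]
  · have h1 : n'.succ - b.val < n'.succ := by omega
    rw [Nat.mod_eq_of_lt h1]
    have h2 : b.val + (n'.succ - b.val) = n'.succ := by omega
    rw [h2]
    simp

lemma chain_case (hn : 3 ≤ n) (w : List (Fin n)) (hw : w.Chain' (· ≠ ·)) :
    mkR K n (orbitPoly K n w) ∈ Algebra.adjoin K (atomSet K n) := by
  haveI : NeZero n := ⟨by omega⟩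
  cases w with
  | nil =>
      have h0 : orbitPoly K n ([] : List (Fin n)) = (n : FreeAlgebra K (Fin n)) := by
        simp [orbitPoly_eq, wm_nil]
      rw [h0, map_natCast]
      exact Subalgebra.natCast_mem _ n
  | cons b t =>
      have hinj : Function.Injective ((⇑(finRotate n))^[n - b.val]) :=
        Function.Injective.iterate (Equiv.injective _) _
      rw [← orbitPoly_map_iterate K n (by omega : n ≠ 0) (n - b.val) (b :: t)]
      apply Algebra.subset_adjoin
      refine ⟨(b :: t).map ((⇑(finRotate n))^[n - b.val]), ?_, ?_, rfl⟩
      · have h0 := iterate_hit_zero n hn b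
        simp only [List.map_cons, List.head?_cons, h0]
      · rw [List.Chain', List.isChain_map]
        exact List.IsChain.imp (fun a b hab hEq => hab (hinj hEq)) hw

open Fin.NatCast in
lemma sigma_mem (hn : 3 ≤ n) :
    mkR K n (elemPoly K n 1) ∈ Algebra.adjoin K (atomSet K n) := by
  haveI : NeZero n := ⟨by omega⟩
  have h : elemPoly K n 1 = orbitPoly K n [(0 : Fin n)] := by
    rw [sigma1_eq, orbitPoly_eq]
    obtain ⟨n', rfl⟩ := Nat.exists_eq_succ_of_ne_zero (by omega : n ≠ 0)
    simp only [List.map_cons, List.map_nil, finRotate_iterate, zero_add, wm_cons, wm_nil, mul_one]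
    rw [← Fin.sum_univ_eq_sum_range (fun m => FreeAlgebra.ι K ((m : Fin (n' + 1))))]
    simp [Fin.cast_val_eq_self]
  rw [h]
  exact Algebra.subset_adjoin ⟨[(0 : Fin n)], by simp, List.isChain_singleton _, rfl⟩

lemma main_claim (hn : 3 ≤ n) (w : List (Fin n)) :
    mkR K n (orbitPoly K n w) ∈ Algebra.adjoin K (atomSet K n) := by
  haveI : NeZero n := ⟨by omega⟩
  haveI : Nontrivial (Fin n) := Fin.nontrivial_iff_two_le.mpr (by omega)
  suffices H : ∀ L M (w : List (Fin n)), w.length ≤ L → mu w ≤ M →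
      mkR K n (orbitPoly K n w) ∈ Algebra.adjoin K (atomSet K n) from
    H w.length (mu w) w le_rfl le_rfl
  intro L
  induction L with
  | zero =>
      intro M w hw _
      rw [List.length_eq_zero_iff.mp (Nat.le_zero.mp hw)]
      exact chain_case K n hn [] List.isChain_nil
  | succ L ihL =>
      intro M
      induction M with
      | zero =>
          intro w hlen hmu
          by_cases hch : w.Chain' (· ≠ ·)
          · exact chain_case K n hn w hch
          · exfalso
            obtain ⟨u, a, v, rfl⟩ := not_chain'_decomp w hch
            obtain ⟨j, hj⟩ := exists_ne a
            have := mu_set_lt u a j v hj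
            omega
      | succ M ihM =>
          intro w hlen hmu
          by_cases hch : w.Chain' (· ≠ ·)
          · exact chain_case K n hn w hch
          · obtain ⟨u, a, v, rfl⟩ := not_chain'_decomp w hch
            rw [orbit_rewrite K n (by omega : 1 ≤ n) u v a]
            apply sub_mem
            · refine mul_mem (sigma_mem K n hn)
                (ihL (mu (u ++ a :: v)) (u ++ a :: v) ?_ le_rfl)
              have := hlen
              simp only [List.length_append, List.length_cons] at this ⊢
              omega
            · apply sum_mem
              intro j hj
              refine ihM (u ++ a :: j :: v) ?_ ?_
              · simp only [List.length_append, List.length_cons] at hlen ⊢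
                omega
              · have hne : j ≠ a := (Finset.mem_erase.mp hj).1
                have := mu_set_lt u a j v hne
                omega

end Main

lemma mem_monomial_span (K : Type*) [Field K] (n : ℕ) (x : FreeAlgebra K (Fin n)) :
    x ∈ Submodule.span K {z : FreeAlgebra K (Fin n) | ∃ w, z = wordMonomial K n w} := by
  set S := Submodule.span K {z : FreeAlgebra K (Fin n) | ∃ w, z = wordMonomial K n w} with hS
  have hmul : ∀ a ∈ S, ∀ b ∈ S, a * b ∈ S := by
    intro a ha
    induction ha using Submodule.span_induction with
    | mem x hx =>
        intro b hb
        induction hb using Submodule.span_induction with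
        | mem y hy =>
            obtain ⟨u, rfl⟩ := hx
            obtain ⟨v, rfl⟩ := hy
            exact Submodule.subset_span ⟨u ++ v, (wm_append K n u v).symm⟩
        | zero => rw [mul_zero]; exact zero_mem S
        | add y z hy hz ihy ihz => rw [mul_add]; exact add_mem ihy ihz
        | smul c y hy ihy => rw [mul_smul_comm]; exact Submodule.smul_mem S c ihy
    | zero => intro b hb; rw [zero_mul]; exact zero_mem S
    | add x y hx hy ihx ihy => intro b hb; rw [add_mul]; exact add_mem (ihx b hb) (ihy b hb)
    | smul c x hx ihx => intro b hb; rw [smul_mul_assoc]; exact Submodule.smul_mem S c (ihx b hb)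
  induction x using FreeAlgebra.induction with
  | grade0 r =>
      rw [Algebra.algebraMap_eq_smul_one]
      exact Submodule.smul_mem S r (Submodule.subset_span ⟨[], rfl⟩)
  | grade1 i => exact Submodule.subset_span ⟨[i], by simp [wm_cons, wm_nil]⟩
  | mul a b ha hb => exact hmul a ha b hb
  | add a b ha hb => exact add_mem ha hb


/-- Every `G`-invariant element of `R′` — an element `p` such that for every
representative `q ∈ P` of `p` and every `g ∈ G` the class of `q^g` is again `p` —
lies in the `K`-subalgebra of `R′` generated by the images of the orbit
polynomials of the atoms (monomials beginning with `x_1` with all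
indeterminates to the first power). -/
theorem invariant_mem_adjoin_atom_orbitPolys
    (K : Type*) [Field K] [CharZero K] (n : ℕ) (hn : 3 ≤ n)
    (p : Rquot K n)
    (hp : ∀ (m : ℕ) (q : FreeAlgebra K (Fin n)),
      mkR K n q = p → mkR K n ((⇑(rotHom K n))^[m] q) = p) :
    p ∈ Algebra.adjoin K
      {y : Rquot K n | ∃ w : List (Fin n),
        (w.map Fin.val).head? = some 0 ∧ w.Chain' (· ≠ ·) ∧
        y = mkR K n (orbitPoly K n w)} := by
  haveI : NeZero n := ⟨by omega⟩
  obtain ⟨q, hq⟩ := RingQuot.mkAlgHom_surjective K (commRel K n) p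
  have hq' : mkR K n q = p := hq
  set A := Algebra.adjoin K
      {y : Rquot K n | ∃ w : List (Fin n),
        (w.map Fin.val).head? = some 0 ∧ w.Chain' (· ≠ ·) ∧
        y = mkR K n (orbitPoly K n w)} with hA
  have hAatom : A = Algebra.adjoin K (atomSet K n) := rfl
  have key : ∀ x : FreeAlgebra K (Fin n),
      mkR K n (∑ m ∈ Finset.range n, ((rotHom K n).toLinearMap ^ m) x) ∈ A := by
    intro x
    have hx := mem_monomial_span K n x
    induction hx using Submodule.span_induction with
    | mem z hz =>
        obtain ⟨w, rfl⟩ := hz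
        have hE : ∑ m ∈ Finset.range n, ((rotHom K n).toLinearMap ^ m) (wordMonomial K n w)
            = orbitPoly K n w := by
          apply Finset.sum_congr rfl
          intro m _
          rw [Module.End.pow_apply]
          rfl
        rw [hE, hAatom]
        exact main_claim K n hn w
    | zero =>
        simp only [map_zero, Finset.sum_const_zero]
        exact zero_mem A
    | add y z hy hz ihy ihz =>
        simp only [map_add, Finset.sum_add_distrib]
        exact add_mem ihy ihz
    | smul c y hy ihy =>
        simp only [map_smul, ← Finset.smul_sum]
        exact Subalgebra.smul_mem A ihy c
  have h2 : mkR K n (∑ m ∈ Finset.range n, ((rotHom K n).toLinearMap ^ m) q)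
      = (n : K) • p := by
    rw [map_sum]
    have hc : ∀ m ∈ Finset.range n, mkR K n (((rotHom K n).toLinearMap ^ m) q) = p := by
      intro m _
      have hit : ((rotHom K n).toLinearMap ^ m) q = (⇑(rotHom K n))^[m] q := by
        rw [Module.End.pow_apply]
        rfl
      rw [hit]
      exact hp m q hq'
    rw [Finset.sum_congr rfl hc, Finset.sum_const, Finset.card_range]
    exact (Nat.cast_smul_eq_nsmul K n p).symm
  have hmem := key q
  rw [h2] at hmem
  have hmem2 := Subalgebra.smul_mem A hmem ((n : K)⁻¹)
  rw [smul_smul, inv_mul_cancel₀ (Nat.cast_ne_zero.mpr (by omega : n ≠ 0)), one_smul] at hmem2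
  exact hmem2
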